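/- Let h(x) = Σᵢ f((Ax−b)ᵢ) with f C-quasi-self-concordant, and res_x(Δ) = ∇f(x)ᵀ(AΔ) − (1/e)(AΔ)ᵀ∇²f(x)(AΔ). If ‖AΔ‖_∞ ≤ 1/C and k = e², then h(x − Δ/k) − h(x) ≤ −(1/k)·res_x(Δ). -/

import Mathlib

open Matrix

section Aux

variable {C : ℝ} {f : ℝ → ℝ}

lemma aux_d2_nonneg (hC : 0 < C)
    (hqsc : ∀ t : ℝ, |iteratedDeriv 3 f t| ≤ C * iteratedDeriv 2 f t) (t : ℝ) :
    0 ≤ iteratedDeriv 2 f t := by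
  nlinarith [abs_nonneg (iteratedDeriv 3 f t), hqsc t]

lemma aux_hasDerivAt_d2 (hf : ContDiff ℝ 3 f) (t : ℝ) :
    HasDerivAt (iteratedDeriv 2 f) (iteratedDeriv 3 f t) t := by
  have h2 : Differentiable ℝ (iteratedDeriv 2 f) :=
    hf.differentiable_iteratedDeriv 2 (by norm_num)
  rw [show iteratedDeriv 3 f = deriv (iteratedDeriv 2 f) from iteratedDeriv_succ]
  exact (h2 t).hasDerivAt

/-- Gronwall-type Hessian stability. -/
lemma aux_gronwall (hC : 0 < C) (hf : ContDiff ℝ 3 f)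
    (hqsc : ∀ t : ℝ, |iteratedDeriv 3 f t| ≤ C * iteratedDeriv 2 f t)
    (u w : ℝ) :
    iteratedDeriv 2 f w ≤ Real.exp (C * |w - u|) * iteratedDeriv 2 f u := by
  set g := iteratedDeriv 2 f with hg
  have hgd : ∀ t, HasDerivAt g (iteratedDeriv 3 f t) t := aux_hasDerivAt_d2 hf
  rcases le_or_gt u w with hle | hlt
  · -- φ t = g t * exp (-(C*t)) is antitone
    have hφd : ∀ t, HasDerivAt (fun t => g t * Real.exp (-(C * t)))
        (iteratedDeriv 3 f t * Real.exp (-(C * t)) + g t * (Real.exp (-(C * t)) * (-C))) t := by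
      intro t
      have hin : HasDerivAt (fun t : ℝ => -(C * t)) (-C) t := by
        simpa [Pi.neg_def] using ((hasDerivAt_id t).const_mul C).neg
      exact (hgd t).mul hin.exp
    have hanti : Antitone (fun t => g t * Real.exp (-(C * t))) := by
      apply antitone_of_deriv_nonpos
      · exact fun t => (hφd t).differentiableAt
      · intro t
        rw [(hφd t).deriv]
        have h1 := hqsc t
        have h2 := Real.exp_pos (-(C * t))
        nlinarith [abs_le.1 h1, (abs_le.1 h1).2]
    have := hanti hle
    have hE := Real.exp_pos (-(C * w))
    rw [abs_of_nonneg (by linarith : (0:ℝ) ≤ w - u)]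
    have key : g w * Real.exp (-(C * w)) ≤ g u * Real.exp (-(C * u)) := this
    have : g w ≤ g u * Real.exp (-(C * u)) * Real.exp (C * w) := by
      rw [← le_div_iff₀ hE] at key
      calc g w ≤ g u * Real.exp (-(C * u)) / Real.exp (-(C * w)) := key
        _ = g u * Real.exp (-(C * u)) * Real.exp (C * w) := by
            rw [div_eq_mul_inv, ← Real.exp_neg]; ring_nf
    calc g w ≤ g u * Real.exp (-(C * u)) * Real.exp (C * w) := this
      _ = Real.exp (C * (w - u)) * g u := by rw [mul_assoc, ← Real.exp_add]; ring_nf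
  · -- ψ t = g t * exp (C*t) is monotone
    have hψd : ∀ t, HasDerivAt (fun t => g t * Real.exp (C * t))
        (iteratedDeriv 3 f t * Real.exp (C * t) + g t * (Real.exp (C * t) * C)) t := by
      intro t
      have hin : HasDerivAt (fun t : ℝ => C * t) C t := by
        simpa using (hasDerivAt_id t).const_mul C
      exact (hgd t).mul hin.exp
    have hmono : Monotone (fun t => g t * Real.exp (C * t)) := by
      apply monotone_of_deriv_nonneg
      · exact fun t => (hψd t).differentiableAt
      · intro t
        rw [(hψd t).deriv]
        have h1 := hqsc t
        have h2 := Real.exp_pos (C * t)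
        nlinarith [(abs_le.1 h1).1]
    have key : g w * Real.exp (C * w) ≤ g u * Real.exp (C * u) := hmono hlt.le
    have hE := Real.exp_pos (C * w)
    rw [abs_of_nonpos (by linarith : w - u ≤ 0)]
    rw [← le_div_iff₀ hE] at key
    calc g w ≤ g u * Real.exp (C * u) / Real.exp (C * w) := key
      _ = Real.exp (C * -(w - u)) * g u := by
          rw [div_eq_mul_inv, ← Real.exp_neg, mul_assoc, ← Real.exp_add]; ring_nf

/-- Second-order Taylor upper bound with a uniform bound on the second derivative
along the segment. -/
lemma aux_taylor (hf : ContDiff ℝ 3 f) (u s M : ℝ)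
    (hM : ∀ t ∈ Set.Icc (0:ℝ) 1, iteratedDeriv 2 f (u + t * s) ≤ M) :
    f (u + s) - f u - s * deriv f u ≤ s ^ 2 * M / 2 := by
  have hd1 : Differentiable ℝ f := hf.differentiable (by norm_num)
  have hd2 : Differentiable ℝ (deriv f) := by
    have := hf.differentiable_iteratedDeriv 1 (by norm_num)
    rwa [iteratedDeriv_one] at this
  have hdd : ∀ y, HasDerivAt (deriv f) (iteratedDeriv 2 f y) y := by
    intro y
    rw [show iteratedDeriv 2 f = deriv (deriv f) by
      rw [iteratedDeriv_succ, iteratedDeriv_one]]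
    exact (hd2 y).hasDerivAt
  have haff : ∀ t : ℝ, HasDerivAt (fun t : ℝ => u + t * s) s t := by
    intro t
    simpa using ((hasDerivAt_id t).mul_const s).const_add u
  -- G₁ = derivative of the error, shown ≤ 0 on [0,1]
  set G₁ : ℝ → ℝ := fun t => s * deriv f (u + t * s) - s * deriv f u - t * (s ^ 2 * M) with hG₁def
  have hG₁d : ∀ t, HasDerivAt G₁
      (s * (iteratedDeriv 2 f (u + t * s) * s) - s ^ 2 * M) t := by
    intro t
    have hcomp : HasDerivAt (fun t => deriv f (u + t * s))
        (iteratedDeriv 2 f (u + t * s) * s) t := by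
        have := (hdd (u + t * s)).comp t (haff t); exact this
    have hlin : HasDerivAt (fun t : ℝ => t * (s ^ 2 * M)) (s ^ 2 * M) t := by
      simpa using (hasDerivAt_id t).mul_const (s ^ 2 * M)
    exact ((hcomp.const_mul s).sub_const (s * deriv f u)).sub hlin
  have hG₁anti : AntitoneOn G₁ (Set.Icc 0 1) := by
    apply antitoneOn_of_deriv_nonpos (convex_Icc 0 1)
    · exact fun t _ => (hG₁d t).differentiableAt.continuousAt.continuousWithinAt
    · exact fun t _ => (hG₁d t).differentiableAt.differentiableWithinAt
    · intro t ht
      rw [interior_Icc] at ht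
      rw [(hG₁d t).deriv]
      have := hM t ⟨ht.1.le, ht.2.le⟩
      nlinarith [sq_nonneg s]
  have hG₁nonpos : ∀ t ∈ Set.Icc (0:ℝ) 1, G₁ t ≤ 0 := by
    intro t ht
    have := hG₁anti (Set.left_mem_Icc.2 zero_le_one) ht ht.1
    simpa [hG₁def] using this
  -- G = the error itself
  set G : ℝ → ℝ := fun t => f (u + t * s) - f u - t * (s * deriv f u)
      - t ^ 2 * (s ^ 2 * M) / 2 with hGdef
  have hGd : ∀ t, HasDerivAt G (G₁ t) t := by
    intro t
    have hcomp : HasDerivAt (fun t => f (u + t * s)) (deriv f (u + t * s) * s) t :=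
      ((hd1 (u + t * s)).hasDerivAt).comp t (haff t)
    have h1 : HasDerivAt (fun t : ℝ => t * (s * deriv f u)) (s * deriv f u) t := by
      simpa using (hasDerivAt_id t).mul_const (s * deriv f u)
    have h2 : HasDerivAt (fun t : ℝ => t ^ 2 * (s ^ 2 * M) / 2) (t * (s ^ 2 * M)) t := by
      have := ((hasDerivAt_pow 2 t).mul_const (s ^ 2 * M)).div_const 2
      exact this.congr_deriv (by push_cast; ring)
    have := ((hcomp.sub_const (f u)).sub h1).sub h2
    exact this.congr_deriv (by simp [hG₁def]; ring)
  have hGanti : AntitoneOn G (Set.Icc 0 1) := by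
    apply antitoneOn_of_deriv_nonpos (convex_Icc 0 1)
    · exact fun t _ => (hGd t).differentiableAt.continuousAt.continuousWithinAt
    · exact fun t _ => (hGd t).differentiableAt.differentiableWithinAt
    · intro t ht
      rw [interior_Icc] at ht
      rw [(hGd t).deriv]
      exact hG₁nonpos t ⟨ht.1.le, ht.2.le⟩
  have := hGanti (Set.left_mem_Icc.2 zero_le_one) (Set.right_mem_Icc.2 zero_le_one) zero_le_one
  simp only [hGdef] at this
  norm_num at this
  linarith

end Aux

theorem residual_upper_bound {n d : ℕ} (C : ℝ) (hC : 0 < C) (f : ℝ → ℝ)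
    (hf : ContDiff ℝ 3 f) (hconv : ConvexOn ℝ Set.univ f)
    (hqsc : ∀ t : ℝ, |iteratedDeriv 3 f t| ≤ C * iteratedDeriv 2 f t)
    (A : Matrix (Fin n) (Fin d) ℝ) (b : Fin n → ℝ)
    (h : (Fin d → ℝ) → ℝ)
    (hh : ∀ z, h z = ∑ i, f ((A.mulVec z - b) i))
    (x Δ : Fin d → ℝ) (hΔ : ‖A.mulVec Δ‖ ≤ 1 / C)
    (k : ℝ) (hk : k = Real.exp 1 ^ 2) :
    h (x - k⁻¹ • Δ) - h x ≤
      -(k⁻¹ * ((∑ i, deriv f ((A.mulVec x - b) i) * A.mulVec Δ i) -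
        (Real.exp 1)⁻¹ * ∑ i, iteratedDeriv 2 f ((A.mulVec x - b) i) * (A.mulVec Δ i) ^ 2)) := by
  have he : (1:ℝ) < Real.exp 1 := by
    have := Real.exp_one_gt_d9; linarith
  have hkpos : 0 < k := by rw [hk]; positivity
  have hk1 : 1 ≤ k := by nlinarith
  have hkinv : 0 < k⁻¹ := inv_pos.2 hkpos
  set u : Fin n → ℝ := A.mulVec x - b with hu
  set v : Fin n → ℝ := A.mulVec Δ with hv
  have hmv : A.mulVec (x - k⁻¹ • Δ) - b = fun i => u i + (-(k⁻¹ * v i)) := by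
    funext i
    simp [hu, hv, Matrix.mulVec_sub, Matrix.mulVec_smul, Pi.sub_apply, Pi.smul_apply,
      smul_eq_mul]
    ring
  -- pointwise bound
  have key : ∀ i, f (u i + (-(k⁻¹ * v i))) - f (u i) ≤
      -(k⁻¹ * (deriv f (u i) * v i)) + k⁻¹ * ((Real.exp 1)⁻¹ * (iteratedDeriv 2 f (u i) * v i ^ 2)) := by
    intro i
    set s : ℝ := -(k⁻¹ * v i) with hs
    have hvi : |v i| ≤ 1 / C := by
      calc |v i| = ‖v i‖ := (Real.norm_eq_abs _).symm
        _ ≤ ‖v‖ := norm_le_pi_norm v i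
        _ ≤ 1 / C := hΔ
    have hsabs : |s| ≤ k⁻¹ * (1 / C) := by
      rw [hs, abs_neg, abs_mul, abs_of_pos hkinv]
      exact mul_le_mul_of_nonneg_left hvi hkinv.le
    have hCs : C * |s| ≤ k⁻¹ := by
      calc C * |s| ≤ C * (k⁻¹ * (1 / C)) := by
            exact mul_le_mul_of_nonneg_left hsabs hC.le
        _ = k⁻¹ := by field_simp
    -- bound the second derivative along the segment
    set M : ℝ := Real.exp 1 * iteratedDeriv 2 f (u i) with hM
    have hMseg : ∀ t ∈ Set.Icc (0:ℝ) 1, iteratedDeriv 2 f (u i + t * s) ≤ M := by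
      intro t ht
      have h1 := aux_gronwall hC hf hqsc (u i) (u i + t * s)
      have habs : |u i + t * s - u i| = t * |s| := by
        rw [show u i + t * s - u i = t * s by ring, abs_mul, abs_of_nonneg ht.1]
      rw [habs] at h1
      have hle1 : C * (t * |s|) ≤ 1 := by
        have h2 : t * |s| ≤ |s| := by
          nlinarith [abs_nonneg s, ht.2, ht.1]
        have : C * (t * |s|) ≤ C * |s| := mul_le_mul_of_nonneg_left h2 hC.le
        have hki : k⁻¹ ≤ 1 := by
          rw [inv_le_one_iff₀]; right; exact hk1
        linarith
      have hexp : Real.exp (C * (t * |s|)) ≤ Real.exp 1 := Real.exp_le_exp.2 hle1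
      have hd2n := aux_d2_nonneg hC hqsc (u i)
      calc iteratedDeriv 2 f (u i + t * s)
          ≤ Real.exp (C * (t * |s|)) * iteratedDeriv 2 f (u i) := h1
        _ ≤ M := by rw [hM]; exact mul_le_mul_of_nonneg_right hexp hd2n
    have htay := aux_taylor hf (u i) s M hMseg
    -- now: f(u+s) - f u ≤ s f'(u) + s² M / 2 ≤ target
    have hd2n := aux_d2_nonneg hC hqsc (u i)
    have hsderiv : s * deriv f (u i) = -(k⁻¹ * (deriv f (u i) * v i)) := by
      rw [hs]; ring
    have hquad : s ^ 2 * M / 2 ≤ k⁻¹ * ((Real.exp 1)⁻¹ * (iteratedDeriv 2 f (u i) * v i ^ 2)) := by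
      rw [hs, hM]
      have hs2 : (-(k⁻¹ * v i)) ^ 2 = k⁻¹ ^ 2 * v i ^ 2 := by ring
      rw [hs2]
      -- need: k⁻² * v² * (e * D) / 2 ≤ k⁻¹ * (e⁻¹ * (D * v²))
      -- i.e. k⁻¹ * e / 2 ≤ e⁻¹, i.e. e² ≤ 2k = 2e². True.
      have hepos : (0:ℝ) < Real.exp 1 := Real.exp_pos 1
      have hcoef : k⁻¹ ^ 2 * Real.exp 1 / 2 ≤ k⁻¹ * (Real.exp 1)⁻¹ := by
        rw [hk]
        have h1 : ((Real.exp 1 ^ 2)⁻¹ : ℝ) ^ 2 * Real.exp 1 = (Real.exp 1)⁻¹ ^ 3 := by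
          field_simp
        have h2 : ((Real.exp 1 ^ 2)⁻¹ : ℝ) * (Real.exp 1)⁻¹ = (Real.exp 1)⁻¹ ^ 3 := by
          field_simp
        rw [h1, h2]
        have := pow_pos (inv_pos.2 hepos) 3
        linarith
      nlinarith [sq_nonneg (v i), mul_le_mul_of_nonneg_right hcoef
        (mul_nonneg hd2n (sq_nonneg (v i)))]
    calc f (u i + s) - f (u i)
        ≤ s * deriv f (u i) + s ^ 2 * M / 2 := by linarith
      _ ≤ -(k⁻¹ * (deriv f (u i) * v i)) +
          k⁻¹ * ((Real.exp 1)⁻¹ * (iteratedDeriv 2 f (u i) * v i ^ 2)) := by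
          rw [hsderiv]; linarith
  -- sum up
  rw [hh, hh, hmv]
  have hsum : ∑ i, f (u i + (-(k⁻¹ * v i))) - ∑ i, f ((A.mulVec x - b) i)
      ≤ ∑ i, (-(k⁻¹ * (deriv f (u i) * v i)) +
        k⁻¹ * ((Real.exp 1)⁻¹ * (iteratedDeriv 2 f (u i) * v i ^ 2))) := by
    rw [← Finset.sum_sub_distrib]
    exact Finset.sum_le_sum fun i _ => key i
  calc (∑ i, f (u i + (-(k⁻¹ * v i)))) - ∑ i, f ((A.mulVec x - b) i)
      ≤ ∑ i, (-(k⁻¹ * (deriv f (u i) * v i)) +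
        k⁻¹ * ((Real.exp 1)⁻¹ * (iteratedDeriv 2 f (u i) * v i ^ 2))) := hsum
    _ = -(k⁻¹ * ((∑ i, deriv f ((A.mulVec x - b) i) * A.mulVec Δ i) -
        (Real.exp 1)⁻¹ * ∑ i, iteratedDeriv 2 f ((A.mulVec x - b) i) * (A.mulVec Δ i) ^ 2)) := by
      simp only [Finset.sum_add_distrib, Finset.sum_neg_distrib, ← Finset.mul_sum]
      ring
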